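/- Let V be a braided monoidal category with braiding c, A an object of V, and W : A⊗A → A⊗A a morphism. Then W satisfies the fusion equation W₂₃∘W₁₂ = W₁₂∘W₁₃∘W₂₃ (where W₁₂ = W⊗1_A, W₂₃ = 1_A⊗W, and W₁₃ = (c_{A,A}⊗1_A)∘(1_A⊗W)∘(c_{A,A}⊗1_A)⁻¹) if and only if the morphism v = c_{A,A}∘W satisfies the 3-cocycle condition (v⊗1_A)∘(1_A⊗c_{A,A})∘(v⊗1_A) = (1_A⊗v)∘(v⊗1_A)∘(1_A⊗v). -/

import Mathlib

open CategoryTheory MonoidalCategory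

section Aux

variable {V : Type*} [Category V] [MonoidalCategory V] [BraidedCategory V]

private lemma auxN1 (A : V) (W : A ⊗ A ⟶ A ⊗ A) :
    ((α_ A A A).hom ≫ (A ◁ W) ≫ (α_ A A A).inv) ≫ ((β_ A A).hom ▷ A) ≫
      ((α_ A A A).hom ≫ (A ◁ (β_ A A).hom) ≫ (α_ A A A).inv) =
    ((β_ A A).hom ▷ A) ≫ ((α_ A A A).hom ≫ (A ◁ (β_ A A).hom) ≫ (α_ A A A).inv) ≫ (W ▷ A) := by
  have h := BraidedCategory.braiding_naturality_right A W
  rw [BraidedCategory.braiding_tensor_right_hom] at h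
  simp only [Category.assoc] at h ⊢
  rw [← cancel_epi (α_ A A A).inv]
  simp only [Iso.inv_hom_id_assoc, Category.assoc]
  simpa using h

private lemma auxN2 (A : V) (W : A ⊗ A ⟶ A ⊗ A) :
    (W ▷ A) ≫ ((α_ A A A).hom ≫ (A ◁ (β_ A A).hom) ≫ (α_ A A A).inv) ≫ ((β_ A A).hom ▷ A) =
    ((α_ A A A).hom ≫ (A ◁ (β_ A A).hom) ≫ (α_ A A A).inv) ≫ ((β_ A A).hom ▷ A) ≫
      ((α_ A A A).hom ≫ (A ◁ W) ≫ (α_ A A A).inv) := by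
  have h := BraidedCategory.braiding_naturality_left W A
  rw [BraidedCategory.braiding_tensor_left_hom] at h
  simp only [Category.assoc] at h ⊢
  rw [← cancel_mono (α_ A A A).hom]
  simp only [Iso.inv_hom_id, Category.comp_id, Category.assoc]
  simpa using h

private lemma auxYB (A : V) :
    ((β_ A A).hom ▷ A) ≫ ((α_ A A A).hom ≫ (A ◁ (β_ A A).hom) ≫ (α_ A A A).inv) ≫ ((β_ A A).hom ▷ A) =
    ((α_ A A A).hom ≫ (A ◁ (β_ A A).hom) ≫ (α_ A A A).inv) ≫ ((β_ A A).hom ▷ A) ≫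
      ((α_ A A A).hom ≫ (A ◁ (β_ A A).hom) ≫ (α_ A A A).inv) := by
  have h := BraidedCategory.yang_baxter A A A
  rw [← cancel_epi (α_ A A A).inv, ← cancel_mono (α_ A A A).hom]
  simp only [Iso.inv_hom_id_assoc, Iso.inv_hom_id, Category.comp_id, Category.assoc] at h ⊢
  simpa using h

private lemma main_iff (A : V) (W : A ⊗ A ⟶ A ⊗ A) :
    ((W ▷ A) ≫ ((α_ A A A).hom ≫ (A ◁ W) ≫ (α_ A A A).inv) =
      ((α_ A A A).hom ≫ (A ◁ W) ≫ (α_ A A A).inv) ≫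
        (((β_ A A).inv ▷ A) ≫ (α_ A A A).hom ≫ (A ◁ W) ≫ (α_ A A A).inv ≫
          ((β_ A A).hom ▷ A)) ≫ (W ▷ A)) ↔
    (((W ≫ (β_ A A).hom) ▷ A) ≫ (α_ A A A).hom ≫ (A ◁ (β_ A A).hom) ≫ (α_ A A A).inv ≫
        ((W ≫ (β_ A A).hom) ▷ A) =
      (α_ A A A).hom ≫ (A ◁ (W ≫ (β_ A A).hom)) ≫ (α_ A A A).inv ≫
        ((W ≫ (β_ A A).hom) ▷ A) ≫ (α_ A A A).hom ≫ (A ◁ (W ≫ (β_ A A).hom)) ≫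
          (α_ A A A).inv) := by
  set T : (A ⊗ A) ⊗ A ⟶ (A ⊗ A) ⊗ A :=
    ((β_ A A).hom ▷ A) ≫ ((α_ A A A).hom ≫ (A ◁ (β_ A A).hom) ≫ (α_ A A A).inv) ≫
      ((β_ A A).hom ▷ A) with hT
  have eqL : ((W ▷ A) ≫ ((α_ A A A).hom ≫ (A ◁ W) ≫ (α_ A A A).inv)) ≫ T =
      ((W ≫ (β_ A A).hom) ▷ A) ≫ (α_ A A A).hom ≫ (A ◁ (β_ A A).hom) ≫ (α_ A A A).inv ≫
        ((W ≫ (β_ A A).hom) ▷ A) := by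
    rw [hT]
    simp only [comp_whiskerRight, Category.assoc]
    rw [reassoc_of% auxN1 A W]
  have eqR : (((α_ A A A).hom ≫ (A ◁ W) ≫ (α_ A A A).inv) ≫
        (((β_ A A).inv ▷ A) ≫ (α_ A A A).hom ≫ (A ◁ W) ≫ (α_ A A A).inv ≫
          ((β_ A A).hom ▷ A)) ≫ (W ▷ A)) ≫ T =
      (α_ A A A).hom ≫ (A ◁ (W ≫ (β_ A A).hom)) ≫ (α_ A A A).inv ≫
        ((W ≫ (β_ A A).hom) ▷ A) ≫ (α_ A A A).hom ≫ (A ◁ (W ≫ (β_ A A).hom)) ≫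
          (α_ A A A).inv := by
    rw [hT]
    simp only [comp_whiskerRight, MonoidalCategory.whiskerLeft_comp, Category.assoc]
    have yb := auxYB A
    have n2 := reassoc_of% auxN2 A W
    have n1 := reassoc_of% auxN1 A W
    simp only [Category.assoc] at yb n2 n1
    rw [yb, n2, n1]
    simp only [Iso.inv_hom_id_assoc, Category.assoc]
    simp
  constructor
  · intro h
    rw [← eqL, ← eqR, h]
  · intro h
    have : ((W ▷ A) ≫ ((α_ A A A).hom ≫ (A ◁ W) ≫ (α_ A A A).inv)) ≫ T =
        (((α_ A A A).hom ≫ (A ◁ W) ≫ (α_ A A A).inv) ≫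
          (((β_ A A).inv ▷ A) ≫ (α_ A A A).hom ≫ (A ◁ W) ≫ (α_ A A A).inv ≫
            ((β_ A A).hom ▷ A)) ≫ (W ▷ A)) ≫ T := by rw [eqL, eqR, h]
    exact (cancel_mono T).mp this

end Aux

/-- In a braided monoidal category, a morphism `W : A ⊗ A ⟶ A ⊗ A` satisfies
the fusion equation `W₂₃ ∘ W₁₂ = W₁₂ ∘ W₁₃ ∘ W₂₃` if and only if `v = c_{A,A} ∘ W` satisfies
the 3-cocycle condition.  (All composites are written with explicit associators, which are
suppressed in the informal statement.) -/
theorem fusion_iff_three_cocycle {V : Type*} [Category V] [MonoidalCategory V]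
    [BraidedCategory V] (A : V) (W : A ⊗ A ⟶ A ⊗ A) :
    (let W12 : (A ⊗ A) ⊗ A ⟶ (A ⊗ A) ⊗ A := W ▷ A
     let W23 : (A ⊗ A) ⊗ A ⟶ (A ⊗ A) ⊗ A :=
       (α_ A A A).hom ≫ (A ◁ W) ≫ (α_ A A A).inv
     let W13 : (A ⊗ A) ⊗ A ⟶ (A ⊗ A) ⊗ A :=
       ((β_ A A).inv ▷ A) ≫ (α_ A A A).hom ≫ (A ◁ W) ≫ (α_ A A A).inv ≫
         ((β_ A A).hom ▷ A)
     W12 ≫ W23 = W23 ≫ W13 ≫ W12) ↔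
    (let v : A ⊗ A ⟶ A ⊗ A := W ≫ (β_ A A).hom
     (v ▷ A) ≫ (α_ A A A).hom ≫ (A ◁ (β_ A A).hom) ≫ (α_ A A A).inv ≫ (v ▷ A) =
       (α_ A A A).hom ≫ (A ◁ v) ≫ (α_ A A A).inv ≫ (v ▷ A) ≫
         (α_ A A A).hom ≫ (A ◁ v) ≫ (α_ A A A).inv) := by
  exact main_iff A W
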